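/- There exists a torsion-free abelian group G that is both transitive and fully transitive, but whose square G × G is not Krylov transitive. -/

import Mathlib

/-- `n` divides `x` in the group `G`. -/
def Divides {G : Type*} [AddCommGroup G] (n : ℕ) (x : G) : Prop :=
  ∃ z : G, n • z = x

/-- `χ(x) ≤ χ(y)`: every prime-power dividing `x` divides `y`. -/
def HeightLE {G H : Type*} [AddCommGroup G] [AddCommGroup H] (x : G) (y : H) : Prop :=
  ∀ p k : ℕ, p.Prime → Divides (p ^ k) x → Divides (p ^ k) y

/-- `χ(x) = χ(y)`. -/
def HeightEq {G H : Type*} [AddCommGroup G] [AddCommGroup H] (x : G) (y : H) : Prop :=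
  HeightLE x y ∧ HeightLE y x

def FullyTransitive (G : Type*) [AddCommGroup G] : Prop :=
  ∀ x y : G, HeightLE x y → ∃ φ : G →+ G, φ x = y

def KrylovTransitive (G : Type*) [AddCommGroup G] : Prop :=
  ∀ x y : G, HeightEq x y → ∃ φ : G →+ G, φ x = y

def TransitiveGrp (G : Type*) [AddCommGroup G] : Prop :=
  ∀ x y : G, HeightEq x y → ∃ φ : G ≃+ G, φ x = y

def WeaklyTransitive (G : Type*) [AddCommGroup G] : Prop :=
  ∀ (x y : G) (φ ψ : G →+ G), φ x = y → ψ y = x → ∃ η : G ≃+ G, η x = y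

def IsTorsionFreeGrp (G : Type*) [AddCommGroup G] : Prop :=
  ∀ (n : ℤ) (x : G), n ≠ 0 → n • x = 0 → x = 0

/-- `τ(x) ≤ τ(y)`. -/
def TypeLE {G H : Type*} [AddCommGroup G] [AddCommGroup H] (x : G) (y : H) : Prop :=
  ∃ n : ℤ, n ≠ 0 ∧ HeightLE x (n • y)

/-- `τ(x) = τ(y)`. -/
def TypeEq {G H : Type*} [AddCommGroup G] [AddCommGroup H] (x : G) (y : H) : Prop :=
  TypeLE x y ∧ TypeLE y x

def Homogeneous (G : Type*) [AddCommGroup G] : Prop :=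
  ∀ x y : G, x ≠ 0 → y ≠ 0 → TypeEq x y

/-- `π(G)`: primes `p` with `pG ≠ G`. -/
def piSet (G : Type*) [AddCommGroup G] : Set ℕ :=
  {p | p.Prime ∧ ¬ ∀ x : G, ∃ z : G, p • z = x}

namespace S14

/-- the primitive vector attached to a prime `p`: the line through this vector
gets an extra division by `p`.  Every vector is attached to infinitely many primes. -/
def vec (p : ℕ) : ℤ × ℤ :=
  if p = 2 then (1, 1)
  else Denumerable.ofNat (ℤ × ℤ) (Nat.unpair (Nat.count Nat.Prime p)).1

/-- `vec p` is not divisible by `p` in both coordinates. -/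
def Prim (p : ℕ) : Prop := ¬((p : ℤ) ∣ (vec p).1 ∧ (p : ℤ) ∣ (vec p).2)

/-- `q` is `p`-integral. -/
def PInt (p : ℕ) (q : ℚ) : Prop := ¬ (p ∣ q.den)

/-- the local condition at `p` defining our group. -/
def Cc (p : ℕ) (x : ℚ × ℚ) : Prop :=
  (PInt p x.1 ∧ PInt p x.2) ∨
  (Prim p ∧ PInt p ((p : ℚ) * x.1) ∧ PInt p ((p : ℚ) * x.2) ∧
    PInt p (((vec p).2 : ℚ) * x.1 - ((vec p).1 : ℚ) * x.2))

lemma pint_of_den_one {p : ℕ} (hp : 2 ≤ p) {q : ℚ} (h : q.den = 1) : PInt p q := by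
  rw [PInt, h]
  intro hd
  have := Nat.le_of_dvd one_pos hd
  omega

lemma pint_zero {p : ℕ} (hp : 2 ≤ p) : PInt p 0 := pint_of_den_one hp rfl

lemma pint_one {p : ℕ} (hp : 2 ≤ p) : PInt p 1 := pint_of_den_one hp rfl

lemma pint_int {p : ℕ} (hp : 2 ≤ p) (n : ℤ) : PInt p (n : ℚ) :=
  pint_of_den_one hp (Rat.den_intCast n)

lemma pint_add {p : ℕ} (hp : p.Prime) {a b : ℚ} (ha : PInt p a) (hb : PInt p b) :
    PInt p (a + b) := by
  intro h
  rcases (Nat.Prime.dvd_mul hp).1 (h.trans (Rat.add_den_dvd a b)) with h' | h'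
  exacts [ha h', hb h']

lemma pint_mul {p : ℕ} (hp : p.Prime) {a b : ℚ} (ha : PInt p a) (hb : PInt p b) :
    PInt p (a * b) := by
  intro h
  rcases (Nat.Prime.dvd_mul hp).1 (h.trans (Rat.mul_den_dvd a b)) with h' | h'
  exacts [ha h', hb h']

lemma pint_neg {p : ℕ} {a : ℚ} (ha : PInt p a) : PInt p (-a) := by
  rwa [PInt, Rat.neg_den]

lemma pint_int_mul {p : ℕ} (hp : p.Prime) (n : ℤ) {a : ℚ} (ha : PInt p a) :
    PInt p ((n : ℚ) * a) := pint_mul hp (pint_int hp.two_le n) ha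

lemma pint_iff {p : ℕ} (hp : p.Prime) (q : ℚ) :
    PInt p q ↔ q = 0 ∨ 0 ≤ padicValRat p q := by
  haveI : Fact p.Prime := ⟨hp⟩
  constructor
  · intro h
    by_cases hq : q = 0
    · exact Or.inl hq
    · right
      rw [padicValRat_def, padicValNat.eq_zero_of_not_dvd h]
      simp [padicValInt]
  · rintro (h | h) hden
    · rw [h] at hden
      exact (pint_zero hp.two_le) hden
    · -- p ∣ q.den, so p ∤ q.num, padicValRat < 0
      have hq : q ≠ 0 := by
        intro h0; rw [h0] at hden; exact (pint_zero hp.two_le) hden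
      have hnum : ¬ p ∣ q.num.natAbs := by
        intro hn
        have h1 : p ∣ Nat.gcd q.num.natAbs q.den := Nat.dvd_gcd hn hden
        rw [Nat.Coprime.gcd_eq_one q.reduced] at h1
        have := Nat.le_of_dvd one_pos h1
        have := hp.two_le
        omega
      have h1 : padicValInt p q.num = 0 := by
        rw [padicValInt, padicValNat.eq_zero_of_not_dvd hnum]
      have h2 : 1 ≤ padicValNat p q.den :=
        one_le_padicValNat_of_dvd q.den_nz hden
      rw [padicValRat_def, h1] at h
      omega

lemma val_p_pow {p : ℕ} (hp : p.Prime) (k : ℕ) :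
    padicValRat p ((p : ℚ) ^ k) = k := by
  haveI : Fact p.Prime := ⟨hp⟩
  have hq : (p : ℚ) ≠ 0 := by exact_mod_cast hp.ne_zero
  rw [padicValRat.pow]
  have : padicValRat p ((p : ℕ) : ℚ) = 1 := padicValRat.self hp.one_lt
  rw [this, mul_one]

lemma pint_scaled_iff {p : ℕ} (hp : p.Prime) (k : ℕ) (q : ℚ) :
    PInt p (((p : ℚ) ^ k)⁻¹ * q) ↔ (q = 0 ∨ (k : ℤ) ≤ padicValRat p q) := by
  haveI : Fact p.Prime := ⟨hp⟩
  have hpq : (p : ℚ) ≠ 0 := by exact_mod_cast hp.ne_zero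
  have hpk : ((p : ℚ) ^ k) ≠ 0 := pow_ne_zero _ hpq
  by_cases hq : q = 0
  · subst hq
    simp [pint_zero hp.two_le]
  · rw [pint_iff hp, padicValRat.mul (inv_ne_zero hpk) hq, padicValRat.inv,
      val_p_pow hp]
    constructor
    · rintro (h | h)
      · exact absurd h (mul_ne_zero (inv_ne_zero hpk) hq)
      · right; omega
    · rintro (h | h)
      · exact absurd h hq
      · right; omega

lemma pint_scaled1_iff {p : ℕ} (hp : p.Prime) (k : ℕ) (q : ℚ) :
    PInt p ((p : ℚ) * (((p : ℚ) ^ k)⁻¹ * q)) ↔ (q = 0 ∨ (k : ℤ) ≤ padicValRat p q + 1) := by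
  haveI : Fact p.Prime := ⟨hp⟩
  have hpq : (p : ℚ) ≠ 0 := by exact_mod_cast hp.ne_zero
  have hpk : ((p : ℚ) ^ k) ≠ 0 := pow_ne_zero _ hpq
  by_cases hq : q = 0
  · subst hq
    simp [pint_zero hp.two_le]
  · have hne : ((p : ℚ) ^ k)⁻¹ * q ≠ 0 := mul_ne_zero (inv_ne_zero hpk) hq
    rw [pint_iff hp, padicValRat.mul hpq hne,
      padicValRat.mul (inv_ne_zero hpk) hq, padicValRat.inv, val_p_pow hp]
    have hv1 : padicValRat p ((p : ℕ) : ℚ) = 1 := padicValRat.self hp.one_lt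
    rw [hv1]
    constructor
    · rintro (h | h)
      · exact absurd h (mul_ne_zero hpq hne)
      · right; omega
    · rintro (h | h)
      · exact absurd h hq
      · right; omega

/-- explicit valuation-theoretic form of divisibility by `p ^ k`. -/
def Dform (p : ℕ) (k : ℕ) (x : ℚ × ℚ) : Prop :=
  ((x.1 = 0 ∨ (k : ℤ) ≤ padicValRat p x.1) ∧ (x.2 = 0 ∨ (k : ℤ) ≤ padicValRat p x.2)) ∨
  (Prim p ∧ (x.1 = 0 ∨ (k : ℤ) ≤ padicValRat p x.1 + 1) ∧
    (x.2 = 0 ∨ (k : ℤ) ≤ padicValRat p x.2 + 1) ∧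
    ((((vec p).2 : ℚ) * x.1 - ((vec p).1 : ℚ) * x.2) = 0 ∨
      (k : ℤ) ≤ padicValRat p (((vec p).2 : ℚ) * x.1 - ((vec p).1 : ℚ) * x.2)))

lemma cc_scaled_iff {p : ℕ} (hp : p.Prime) (k : ℕ) (x : ℚ × ℚ) :
    Cc p (((p : ℚ) ^ k)⁻¹ * x.1, ((p : ℚ) ^ k)⁻¹ * x.2) ↔ Dform p k x := by
  have hdet : (((vec p).2 : ℚ) * (((p : ℚ) ^ k)⁻¹ * x.1) -
      ((vec p).1 : ℚ) * (((p : ℚ) ^ k)⁻¹ * x.2)) =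
      ((p : ℚ) ^ k)⁻¹ * ((((vec p).2 : ℚ) * x.1 - ((vec p).1 : ℚ) * x.2)) := by ring
  unfold Cc Dform
  rw [hdet]
  simp only [pint_scaled_iff hp, pint_scaled1_iff hp]

def Gset : AddSubgroup (ℚ × ℚ) where
  carrier := {x | ∀ p : ℕ, p.Prime → Cc p x}
  zero_mem' := by
    intro p hp
    exact Or.inl ⟨pint_zero hp.two_le, pint_zero hp.two_le⟩
  add_mem' := by
    rintro a b ha hb p hp
    have key : ∀ y z : ℚ × ℚ,
        (((vec p).2 : ℚ) * (y + z).1 - ((vec p).1 : ℚ) * (y + z).2) =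
        ((((vec p).2 : ℚ) * y.1 - ((vec p).1 : ℚ) * y.2) +
          (((vec p).2 : ℚ) * z.1 - ((vec p).1 : ℚ) * z.2)) := by
      intro y z
      simp only [Prod.fst_add, Prod.snd_add]
      ring
    have hm : ∀ y z : ℚ, PInt p y → PInt p z → PInt p ((p:ℚ) * (y + z)) := by
      intro y z h1 h2
      rw [mul_add]
      exact pint_add hp (pint_mul hp (pint_int hp.two_le p) h1)
        (pint_mul hp (pint_int hp.two_le p) h2)
    have detint : ∀ y : ℚ × ℚ, PInt p y.1 → PInt p y.2 →
        PInt p (((vec p).2 : ℚ) * y.1 - ((vec p).1 : ℚ) * y.2) := by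
      intro y h1 h2
      rw [sub_eq_add_neg, ← neg_mul]
      exact pint_add hp (pint_int_mul hp _ h1) (pint_int_mul hp _ h2)
    rcases ha p hp with ⟨ha1, ha2⟩ | ⟨hPr, ha1, ha2, ha3⟩ <;>
      rcases hb p hp with ⟨hb1, hb2⟩ | ⟨hPr', hb1, hb2, hb3⟩
    · exact Or.inl ⟨pint_add hp ha1 hb1, pint_add hp ha2 hb2⟩
    · refine Or.inr ⟨hPr', ?_, ?_, ?_⟩
      · rw [Prod.fst_add, mul_add]
        exact pint_add hp (pint_mul hp (pint_int hp.two_le p) ha1) hb1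
      · rw [Prod.snd_add, mul_add]
        exact pint_add hp (pint_mul hp (pint_int hp.two_le p) ha2) hb2
      · rw [key]
        exact pint_add hp (detint a ha1 ha2) hb3
    · refine Or.inr ⟨hPr, ?_, ?_, ?_⟩
      · rw [Prod.fst_add, mul_add]
        exact pint_add hp ha1 (pint_mul hp (pint_int hp.two_le p) hb1)
      · rw [Prod.snd_add, mul_add]
        exact pint_add hp ha2 (pint_mul hp (pint_int hp.two_le p) hb2)
      · rw [key]
        exact pint_add hp ha3 (detint b hb1 hb2)
    · refine Or.inr ⟨hPr, ?_, ?_, ?_⟩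
      · rw [Prod.fst_add, mul_add]
        exact pint_add hp ha1 hb1
      · rw [Prod.snd_add, mul_add]
        exact pint_add hp ha2 hb2
      · rw [key]
        exact pint_add hp ha3 hb3
  neg_mem' := by
    rintro a ha p hp
    have key : (((vec p).2 : ℚ) * (-a).1 - ((vec p).1 : ℚ) * (-a).2) =
        -(((vec p).2 : ℚ) * a.1 - ((vec p).1 : ℚ) * a.2) := by
      simp only [Prod.fst_neg, Prod.snd_neg]
      ring
    rcases ha p hp with ⟨h1, h2⟩ | ⟨hPr, h1, h2, h3⟩
    · exact Or.inl ⟨by simpa using pint_neg h1, by simpa using pint_neg h2⟩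
    · refine Or.inr ⟨hPr, ?_, ?_, ?_⟩
      · simpa [mul_neg] using pint_neg h1
      · simpa [mul_neg] using pint_neg h2
      · rw [key]; exact pint_neg h3

lemma pint_unit_mul {r : ℕ} (hr : r.Prime) {e : ℚ} (he : e ≠ 0)
    (hv : padicValRat r e = 0) (q : ℚ) : PInt r (e * q) ↔ PInt r q := by
  haveI : Fact r.Prime := ⟨hr⟩
  by_cases hq : q = 0
  · subst hq; simp
  · rw [pint_iff hr, pint_iff hr, padicValRat.mul he hq, hv, zero_add]
    constructor
    · rintro (h | h)
      · exact absurd h (mul_ne_zero he hq)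
      · exact Or.inr h
    · rintro (h | h)
      · exact absurd h hq
      · exact Or.inr h

lemma cc_unit_mul {r : ℕ} (hr : r.Prime) {e : ℚ} (he : e ≠ 0)
    (hv : padicValRat r e = 0) (x : ℚ × ℚ) :
    Cc r (e * x.1, e * x.2) ↔ Cc r x := by
  have h1 : (r : ℚ) * (e * x.1) = e * ((r : ℚ) * x.1) := by ring
  have h2 : (r : ℚ) * (e * x.2) = e * ((r : ℚ) * x.2) := by ring
  have h3 : (((vec r).2 : ℚ) * (e * x.1) - ((vec r).1 : ℚ) * (e * x.2)) =
      e * (((vec r).2 : ℚ) * x.1 - ((vec r).1 : ℚ) * x.2) := by ring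
  unfold Cc
  rw [h1, h2, h3]
  simp only [pint_unit_mul hr he hv]

lemma val_prime_ne {r p : ℕ} (hr : r.Prime) (hp : p.Prime) (hne : r ≠ p) :
    padicValRat r ((p : ℕ) : ℚ) = 0 := by
  rw [padicValRat.of_nat]
  rw [padicValNat.eq_zero_of_not_dvd]
  · simp
  · intro hd
    exact hne ((Nat.prime_dvd_prime_iff_eq hr hp).1 hd)

lemma scaled_mem_iff {p : ℕ} (hp : p.Prime) {x : ℚ × ℚ} (hx : x ∈ Gset) (k : ℕ) :
    ((((p : ℚ) ^ k)⁻¹ * x.1, ((p : ℚ) ^ k)⁻¹ * x.2) ∈ Gset) ↔ Dform p k x := by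
  have hpq : (p : ℚ) ≠ 0 := by exact_mod_cast hp.ne_zero
  have hpk : ((p : ℚ) ^ k) ≠ 0 := pow_ne_zero _ hpq
  constructor
  · intro h
    exact (cc_scaled_iff hp k x).1 (h p hp)
  · intro h r hr
    by_cases hrp : r = p
    · subst hrp
      exact (cc_scaled_iff hr k x).2 h
    · haveI : Fact r.Prime := ⟨hr⟩
      have he : (((p : ℚ) ^ k)⁻¹ : ℚ) ≠ 0 := inv_ne_zero hpk
      have hv : padicValRat r (((p : ℚ) ^ k)⁻¹) = 0 := by
        rw [padicValRat.inv, padicValRat.pow, val_prime_ne hr hp hrp]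
        ring
      exact (cc_unit_mul hr he hv x).2 (hx r hr)

lemma divides_iff_dform {p : ℕ} (hp : p.Prime) (x : ↥Gset) (k : ℕ) :
    Divides (p ^ k) x ↔ Dform p k (x : ℚ × ℚ) := by
  have hpq : (p : ℚ) ≠ 0 := by exact_mod_cast hp.ne_zero
  have hpk : ((p : ℚ) ^ k) ≠ 0 := pow_ne_zero _ hpq
  constructor
  · rintro ⟨z, hz⟩
    have hz' : ((p ^ k : ℕ) • z : ↥Gset) = x := hz
    have hc : ((p : ℚ) ^ k) * (z : ℚ × ℚ).1 = (x : ℚ × ℚ).1 ∧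
        ((p : ℚ) ^ k) * (z : ℚ × ℚ).2 = (x : ℚ × ℚ).2 := by
      have := congrArg (fun t : ↥Gset => (t : ℚ × ℚ)) hz'
      rw [AddSubmonoidClass.coe_nsmul] at this
      constructor
      · have := congrArg Prod.fst this
        simpa [nsmul_eq_mul] using this
      · have := congrArg Prod.snd this
        simpa [nsmul_eq_mul] using this
    have hz1 : (z : ℚ × ℚ).1 = ((p : ℚ) ^ k)⁻¹ * (x : ℚ × ℚ).1 := by
      field_simp
      linear_combination hc.1
    have hz2 : (z : ℚ × ℚ).2 = ((p : ℚ) ^ k)⁻¹ * (x : ℚ × ℚ).2 := by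
      field_simp
      linear_combination hc.2
    have hmem := z.2
    have : (((p : ℚ) ^ k)⁻¹ * (x : ℚ × ℚ).1, ((p : ℚ) ^ k)⁻¹ * (x : ℚ × ℚ).2) ∈ Gset := by
      rw [← hz1, ← hz2]
      exact hmem
    exact (scaled_mem_iff hp x.2 k).1 this
  · intro h
    refine ⟨⟨(((p : ℚ) ^ k)⁻¹ * (x : ℚ × ℚ).1, ((p : ℚ) ^ k)⁻¹ * (x : ℚ × ℚ).2),
      (scaled_mem_iff hp x.2 k).2 h⟩, ?_⟩
    apply Subtype.ext
    rw [AddSubmonoidClass.coe_nsmul]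
    apply Prod.ext
    · show (p ^ k : ℕ) • (((p : ℚ) ^ k)⁻¹ * (x : ℚ × ℚ).1) = (x : ℚ × ℚ).1
      rw [nsmul_eq_mul]
      push_cast
      field_simp
    · show (p ^ k : ℕ) • (((p : ℚ) ^ k)⁻¹ * (x : ℚ × ℚ).2) = (x : ℚ × ℚ).2
      rw [nsmul_eq_mul]
      push_cast
      field_simp

lemma vec_fiber_infinite (u : ℤ × ℤ) : {p : ℕ | p.Prime ∧ vec p = u}.Infinite := by
  have hinf : (setOf Nat.Prime).Infinite := Nat.infinite_setOf_prime
  set i := Encodable.encode u with hi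
  apply Set.infinite_of_injective_forall_mem
    (f := fun j : ℕ => Nat.nth Nat.Prime (Nat.pair i (j + 1)))
  case hi =>
    intro a b hab
    have h1 := Nat.nth_injective hinf hab
    have h2 := congrArg Nat.unpair h1
    rw [Nat.unpair_pair, Nat.unpair_pair] at h2
    simpa using (congrArg Prod.snd h2)
  case hf =>
    intro j
    refine ⟨Nat.nth_mem_of_infinite hinf _, ?_⟩
    have hne2 : Nat.nth Nat.Prime (Nat.pair i (j + 1)) ≠ 2 := by
      intro h
      have h0 : Nat.nth Nat.Prime 0 = 2 := by
        have : Nat.count Nat.Prime 2 = 0 := by decide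
        have h2 := Nat.nth_count (p := Nat.Prime) (n := 2) (by norm_num)
        rw [this] at h2
        exact h2
      have h1 := Nat.nth_injective hinf (h.trans h0.symm)
      have h2 := congrArg Nat.unpair h1
      rw [Nat.unpair_pair] at h2
      simp [Nat.unpair_zero] at h2
    rw [vec, if_neg hne2, Nat.count_nth_of_infinite hinf, Nat.unpair_pair]
    exact Denumerable.ofNat_encode u

lemma exists_good_prime (u : ℤ × ℤ) (N : ℕ) :
    ∃ p : ℕ, p.Prime ∧ vec p = u ∧ N < p := by
  obtain ⟨p, hp, hN⟩ := (vec_fiber_infinite u).exists_gt N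
  exact ⟨p, hp.1, hp.2, hN⟩

lemma not_dvd_nat_of_lt {p n : ℕ} (hn : n ≠ 0) (h : n < p) : ¬ p ∣ n := fun hd =>
  absurd (Nat.le_of_dvd (Nat.pos_of_ne_zero hn) hd) (by omega)

lemma val_nonneg_of_not_dvd_den {p : ℕ} (hp : p.Prime) {q : ℚ}
    (hden : ¬ p ∣ q.den) : 0 ≤ padicValRat p q := by
  rw [padicValRat_def, padicValNat.eq_zero_of_not_dvd hden]
  simp [padicValInt]

lemma val_zero_of_big {p : ℕ} (hp : p.Prime) {q : ℚ} (hq : q ≠ 0)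
    (hnum : ¬ p ∣ q.num.natAbs) (hden : ¬ p ∣ q.den) : padicValRat p q = 0 := by
  rw [padicValRat_def, padicValNat.eq_zero_of_not_dvd hden, padicValInt,
    padicValNat.eq_zero_of_not_dvd hnum]
  simp

lemma val_zero_of_big' {p : ℕ} (hp : p.Prime) {q : ℚ} (hq : q ≠ 0)
    (h1 : q.num.natAbs < p) (h2 : q.den < p) : padicValRat p q = 0 :=
  val_zero_of_big hp hq
    (not_dvd_nat_of_lt (by simpa [Int.natAbs_eq_zero] using (Rat.num_ne_zero.2 hq)) h1)
    (not_dvd_nat_of_lt q.den_nz h2)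

lemma int_dvd_of_vge {p : ℕ} (hp : p.Prime) (n : ℤ)
    (h : (n : ℚ) = 0 ∨ (1 : ℤ) ≤ padicValRat p ((n : ℚ))) : (p : ℤ) ∣ n := by
  rcases h with h | h
  · have : n = 0 := by exact_mod_cast h
    simp [this]
  · haveI : Fact p.Prime := ⟨hp⟩
    by_contra hnd
    rw [padicValRat.of_int, padicValInt.eq_zero_of_not_dvd hnd] at h
    omega

lemma val_two_ne {p : ℕ} (hp : p.Prime) (hp2 : p ≠ 2) : padicValRat p (2 : ℚ) = 0 := by
  have := val_prime_ne hp Nat.prime_two hp2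
  simpa using this

lemma int_dvd_of_vge_half {p : ℕ} (hp : p.Prime) (hp2 : p ≠ 2) (n : ℤ)
    (h : ((n : ℚ)) / 2 = 0 ∨ (1 : ℤ) ≤ padicValRat p (((n : ℚ)) / 2)) : (p : ℤ) ∣ n := by
  haveI : Fact p.Prime := ⟨hp⟩
  rcases eq_or_ne n 0 with hn | hn
  · simp [hn]
  · apply int_dvd_of_vge hp
    right
    rcases h with h | h
    · exfalso
      have : (n : ℚ) ≠ 0 := by exact_mod_cast hn
      simpa [div_eq_zero_iff, this] using h
    · rwa [padicValRat.div (by exact_mod_cast hn) two_ne_zero, val_two_ne hp hp2,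
        sub_zero] at h

/-- any divisibility bound: `p ^ k ∣ x` forces `k ≤ v_p(coordinate) + 1`. -/
lemma divides_bound {p : ℕ} (hp : p.Prime) (x : ↥Gset) (k : ℕ)
    (hd : Divides (p ^ k) x) :
    ((x : ℚ × ℚ).1 = 0 ∨ (k : ℤ) ≤ padicValRat p (x : ℚ × ℚ).1 + 1) ∧
    ((x : ℚ × ℚ).2 = 0 ∨ (k : ℤ) ≤ padicValRat p (x : ℚ × ℚ).2 + 1) := by
  rw [divides_iff_dform hp] at hd
  rcases hd with ⟨h1, h2⟩ | ⟨-, h1, h2, -⟩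
  · constructor
    · rcases h1 with h | h
      · exact Or.inl h
      · exact Or.inr (by omega)
    · rcases h2 with h | h
      · exact Or.inl h
      · exact Or.inr (by omega)
  · exact ⟨h1, h2⟩

lemma coord_eq_zero {x : ↥Gset} (h1 : (x : ℚ × ℚ).1 = 0) (h2 : (x : ℚ × ℚ).2 = 0) :
    x = 0 := by
  apply Subtype.ext
  exact Prod.ext h1 h2

lemma exists_nonzero_coord {x : ↥Gset} (hx : x ≠ 0) :
    ∃ q : ℚ, q ≠ 0 ∧ (q = (x : ℚ × ℚ).1 ∨ q = (x : ℚ × ℚ).2) := by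
  by_cases h1 : (x : ℚ × ℚ).1 = 0
  · refine ⟨(x : ℚ × ℚ).2, fun h2 => hx (coord_eq_zero h1 h2), Or.inr rfl⟩
  · exact ⟨_, h1, Or.inl rfl⟩

lemma dform_pair (p k : ℕ) (u v : ℚ) :
    Dform p k (u, v) ↔
      (((u = 0 ∨ (k : ℤ) ≤ padicValRat p u) ∧ (v = 0 ∨ (k : ℤ) ≤ padicValRat p v)) ∨
      (Prim p ∧ (u = 0 ∨ (k : ℤ) ≤ padicValRat p u + 1) ∧
        (v = 0 ∨ (k : ℤ) ≤ padicValRat p v + 1) ∧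
        ((((vec p).2 : ℚ) * u - ((vec p).1 : ℚ) * v) = 0 ∨
          (k : ℤ) ≤ padicValRat p (((vec p).2 : ℚ) * u - ((vec p).1 : ℚ) * v)))) :=
  Iff.rfl

lemma eq_zero_of_heightLE_zero {y : ↥Gset} (h : HeightLE (0 : ↥Gset) y) : y = 0 := by
  by_contra hy
  obtain ⟨q, hq, hcoord⟩ := exists_nonzero_coord hy
  obtain ⟨p, hN, hp⟩ := Nat.exists_infinite_primes (max q.num.natAbs q.den + 1)
  have h0 : Divides (p ^ 2) (0 : ↥Gset) := ⟨0, smul_zero _⟩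
  have hd := h p 2 hp h0
  have hv : padicValRat p q = 0 := val_zero_of_big' hp hq (by omega) (by omega)
  have hb := divides_bound hp y 2 hd
  rcases hcoord with hc | hc
  · rcases hb.1 with h' | h' <;> rw [← hc] at h' <;> [exact hq h'; omega]
  · rcases hb.2 with h' | h' <;> rw [← hc] at h' <;> [exact hq h'; omega]

lemma not_heightLE_of_indep {x y : ↥Gset}
    (hind : (x : ℚ × ℚ).1 * (y : ℚ × ℚ).2 - (x : ℚ × ℚ).2 * (y : ℚ × ℚ).1 ≠ 0) :
    ¬ HeightLE x y := by
  intro h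
  set a1 : ℚ := (x : ℚ × ℚ).1 with ha1
  set a2 : ℚ := (x : ℚ × ℚ).2 with ha2
  set b1 : ℚ := (y : ℚ × ℚ).1 with hb1
  set b2 : ℚ := (y : ℚ × ℚ).2 with hb2
  have hxeq : (x : ℚ × ℚ) = (a1, a2) := rfl
  have hyeq : (y : ℚ × ℚ) = (b1, b2) := rfl
  have hx0 : ¬(a1 = 0 ∧ a2 = 0) := by
    rintro ⟨e1, e2⟩
    apply hind
    rw [e1, e2]
    ring
  have hy0 : ¬(b1 = 0 ∧ b2 = 0) := by
    rintro ⟨e1, e2⟩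
    apply hind
    rw [e1, e2]
    ring
  set X1 : ℤ := a1.num * a2.den with hX1
  set X2 : ℤ := a2.num * a1.den with hX2
  have hXne : ¬(X1 = 0 ∧ X2 = 0) := by
    rintro ⟨e1, e2⟩
    apply hx0
    constructor
    · have : a1.num = 0 := by
        rcases mul_eq_zero.1 e1 with h' | h'
        · exact h'
        · exact absurd h' (by exact_mod_cast a2.den_nz)
      exact Rat.num_eq_zero.1 this
    · have : a2.num = 0 := by
        rcases mul_eq_zero.1 e2 with h' | h'
        · exact h'
        · exact absurd h' (by exact_mod_cast a1.den_nz)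
      exact Rat.num_eq_zero.1 this
  set g : ℕ := Int.gcd X1 X2 with hgdef
  have hgpos : 0 < g := by
    rcases Nat.eq_zero_or_pos g with h' | h'
    · exact absurd (Int.gcd_eq_zero_iff.1 h') hXne
    · exact h'
  set P1 : ℤ := X1 / (g : ℤ) with hP1def
  set P2 : ℤ := X2 / (g : ℤ) with hP2def
  have hgP1 : (g : ℤ) * P1 = X1 := Int.mul_ediv_cancel' (Int.gcd_dvd_left X1 X2)
  have hgP2 : (g : ℤ) * P2 = X2 := Int.mul_ediv_cancel' (Int.gcd_dvd_right X1 X2)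
  have hcop : Int.gcd P1 P2 = 1 := Int.gcd_div_gcd_div_gcd hgpos
  -- x is parallel to P
  have hd1 : ((a1.den : ℚ)) ≠ 0 := by exact_mod_cast a1.den_nz
  have hd2 : ((a2.den : ℚ)) ≠ 0 := by exact_mod_cast a2.den_nz
  have hnum1 : (a1.num : ℚ) = a1 * a1.den := by
    have := Rat.num_div_den a1
    rw [div_eq_iff hd1] at this
    exact this
  have hnum2 : (a2.num : ℚ) = a2 * a2.den := by
    have := Rat.num_div_den a2
    rw [div_eq_iff hd2] at this
    exact this
  have hX : (X2 : ℚ) * a1 - (X1 : ℚ) * a2 = 0 := by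
    rw [hX1, hX2]
    push_cast
    rw [hnum1, hnum2]
    ring
  have hparP : (P2 : ℚ) * a1 - (P1 : ℚ) * a2 = 0 := by
    have hgq : (g : ℚ) ≠ 0 := by
      have : (0 : ℚ) < (g : ℚ) := by exact_mod_cast hgpos
      exact this.ne'
    have e1 : ((X1 : ℤ) : ℚ) = (g : ℚ) * (P1 : ℚ) := by
      exact_mod_cast congrArg (fun t : ℤ => (t : ℚ)) hgP1.symm
    have e2 : ((X2 : ℤ) : ℚ) = (g : ℚ) * (P2 : ℚ) := by
      exact_mod_cast congrArg (fun t : ℤ => (t : ℚ)) hgP2.symm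
    have hmul : (g : ℚ) * ((P2 : ℚ) * a1 - (P1 : ℚ) * a2) = 0 := by
      rw [e1, e2] at hX
      linear_combination hX
    rcases mul_eq_zero.1 hmul with h' | h'
    · exact absurd h' hgq
    · exact h'
  -- the determinant against y is nonzero
  set D : ℚ := (P2 : ℚ) * b1 - (P1 : ℚ) * b2 with hDdef
  have hD : D ≠ 0 := by
    intro hD0
    rw [hDdef] at hD0
    have hdet1 : (P1 : ℚ) * (a1 * b2 - a2 * b1) = 0 := by
      linear_combination b1 * hparP - a1 * hD0
    have hdet2 : (P2 : ℚ) * (a1 * b2 - a2 * b1) = 0 := by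
      linear_combination b2 * hparP - a2 * hD0
    have hPne : ¬(P1 = 0 ∧ P2 = 0) := by
      rintro ⟨e1, e2⟩
      rw [e1, e2] at hcop
      simp [Int.gcd] at hcop
    rcases mul_eq_zero.1 hdet1 with h' | h'
    · rcases mul_eq_zero.1 hdet2 with h'' | h''
      · exact hPne ⟨by exact_mod_cast h', by exact_mod_cast h''⟩
      · exact hind h''
    · exact hind h'
  obtain ⟨qy, hqy, hqycoord⟩ : ∃ q : ℚ, q ≠ 0 ∧ (q = b1 ∨ q = b2) := by
    by_cases h1 : b1 = 0
    · exact ⟨b2, fun h2 => hy0 ⟨h1, h2⟩, Or.inr rfl⟩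
    · exact ⟨b1, h1, Or.inl rfl⟩
  obtain ⟨p, hp, hvec, hN⟩ := exists_good_prime (P1, P2)
    (max (max a1.den a2.den)
      (max (max qy.num.natAbs qy.den) (max D.num.natAbs D.den)))
  have hdx : Divides (p ^ 1) x := by
    rw [divides_iff_dform hp, hxeq, dform_pair]
    right
    refine ⟨?_, ?_, ?_, ?_⟩
    · rw [Prim, hvec]
      rintro ⟨d1, d2⟩
      have h1 : (p : ℤ) ∣ (Int.gcd P1 P2 : ℤ) := Int.dvd_coe_gcd d1 d2
      rw [hcop] at h1
      have h2 : (p : ℕ) ∣ 1 := by exact_mod_cast h1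
      have := Nat.le_of_dvd one_pos h2
      have := hp.two_le
      omega
    · by_cases h' : a1 = 0
      · exact Or.inl h'
      · right
        have hnd : ¬ p ∣ a1.den := not_dvd_nat_of_lt a1.den_nz (by omega)
        have := val_nonneg_of_not_dvd_den hp hnd
        omega
    · by_cases h' : a2 = 0
      · exact Or.inl h'
      · right
        have hnd : ¬ p ∣ a2.den := not_dvd_nat_of_lt a2.den_nz (by omega)
        have := val_nonneg_of_not_dvd_den hp hnd
        omega
    · left
      rw [hvec]
      exact hparP
  have hdy := h p 1 hp hdx
  rw [divides_iff_dform hp, hyeq, dform_pair] at hdy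
  have hvqy : padicValRat p qy = 0 := val_zero_of_big' hp hqy (by omega) (by omega)
  have hvD : padicValRat p D = 0 := val_zero_of_big' hp hD (by omega) (by omega)
  rcases hdy with ⟨h1, h2⟩ | ⟨-, -, -, hdet⟩
  · rcases hqycoord with h' | h'
    · subst h'
      rcases h1 with h'' | h''
      · exact hqy h''
      · rw [hvqy] at h''
        omega
    · subst h'
      rcases h2 with h'' | h''
      · exact hqy h''
      · rw [hvqy] at h''
        omega
  · rw [hvec] at hdet
    rw [← hDdef] at hdet
    rcases hdet with h'' | h''
    · exact hD h''
    · rw [hvD] at h''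
      omega

lemma dform_scale {p : ℕ} (hp : p.Prime) {s : ℚ} (hs : s ≠ 0) {j : ℕ}
    (hv : padicValRat p s = -(j : ℤ)) (u v : ℚ) (k : ℕ) :
    Dform p k (s * u, s * v) ↔ Dform p (k + j) (u, v) := by
  haveI : Fact p.Prime := ⟨hp⟩
  have key : ∀ (q : ℚ) (c : ℤ) (t : ℤ), ((s * q = 0 ∨ c ≤ padicValRat p (s * q) + t) ↔
      (q = 0 ∨ c + (j : ℤ) ≤ padicValRat p q + t)) := by
    intro q c t
    by_cases hq : q = 0
    · simp [hq]
    · have hsq : s * q ≠ 0 := mul_ne_zero hs hq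
      rw [padicValRat.mul hs hq, hv]
      constructor
      · rintro (h | h)
        · exact absurd h hsq
        · right; omega
      · rintro (h | h)
        · exact absurd h hq
        · right; omega
  have hdet : (((vec p).2 : ℚ) * (s * u) - ((vec p).1 : ℚ) * (s * v)) =
      s * (((vec p).2 : ℚ) * u - ((vec p).1 : ℚ) * v) := by ring
  have hcast : ((k + j : ℕ) : ℤ) = (k : ℤ) + (j : ℤ) := by push_cast; ring
  rw [dform_pair, dform_pair, hdet, hcast]
  have k1 := fun q => key q k 0
  simp only [add_zero] at k1
  have k2 := fun q => key q k 1
  rw [k1 u, k1 v, k2 u, k2 v, k1 (((vec p).2 : ℚ) * u - ((vec p).1 : ℚ) * v)]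

lemma dep_scalar {x y : ↥Gset} (hx : x ≠ 0) (hy : y ≠ 0)
    (hdep : (x : ℚ × ℚ).1 * (y : ℚ × ℚ).2 - (x : ℚ × ℚ).2 * (y : ℚ × ℚ).1 = 0)
    (h : HeightLE x y) :
    ∃ n : ℤ, ((n : ℚ) * (x : ℚ × ℚ).1 = (y : ℚ × ℚ).1 ∧
      (n : ℚ) * (x : ℚ × ℚ).2 = (y : ℚ × ℚ).2) := by
  obtain ⟨s, hs1, hs2⟩ : ∃ s : ℚ, s * (x : ℚ × ℚ).1 = (y : ℚ × ℚ).1 ∧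
      s * (x : ℚ × ℚ).2 = (y : ℚ × ℚ).2 := by
    by_cases h1 : (x : ℚ × ℚ).1 = 0
    · have hx2 : (x : ℚ × ℚ).2 ≠ 0 := fun h2 => hx (coord_eq_zero h1 h2)
      have hy1 : (y : ℚ × ℚ).1 = 0 := by
        have h2 : (x : ℚ × ℚ).2 * (y : ℚ × ℚ).1 = 0 := by
          rw [h1] at hdep
          linarith [hdep]
        rcases mul_eq_zero.1 h2 with h' | h'
        · exact absurd h' hx2
        · exact h'
      refine ⟨(y : ℚ × ℚ).2 / (x : ℚ × ℚ).2, ?_, div_mul_cancel₀ _ hx2⟩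
      rw [h1, hy1, mul_zero]
    · refine ⟨(y : ℚ × ℚ).1 / (x : ℚ × ℚ).1, div_mul_cancel₀ _ h1, ?_⟩
      field_simp
      linear_combination -hdep
  have hs0 : s ≠ 0 := by
    intro h0
    rw [h0, zero_mul] at hs1 hs2
    exact hy (coord_eq_zero hs1.symm hs2.symm)
  have hden : s.den = 1 := by
    by_contra hd
    obtain ⟨p, hp, hpd⟩ := Nat.exists_prime_and_dvd hd
    haveI : Fact p.Prime := ⟨hp⟩
    have hvneg : padicValRat p s < 0 := by
      by_contra hge
      push_neg at hge
      exact ((pint_iff hp s).2 (Or.inr hge)) hpd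
    have hjval : padicValRat p s = -(((-padicValRat p s).toNat : ℕ) : ℤ) := by omega
    set j : ℕ := (-padicValRat p s).toNat with hjdef
    have hj1 : 1 ≤ j := by omega
    obtain ⟨qx, hqx, hqxcoord⟩ := exists_nonzero_coord hx
    classical
    set B : ℕ := (padicValRat p qx).natAbs + 1 with hB
    have hbound : ∀ m : ℕ, Divides (p ^ m) x → m ≤ B := by
      intro m hm
      have hb := divides_bound hp x m hm
      rcases hqxcoord with h' | h'
      · rcases hb.1 with h'' | h''
        · exact absurd (h' ▸ h'') hqx
        · rw [← h'] at h''
          omega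
      · rcases hb.2 with h'' | h''
        · exact absurd (h' ▸ h'') hqx
        · rw [← h'] at h''
          omega
    set PP : ℕ → Prop := fun m => Divides (p ^ m) x with hPP
    have hP0 : PP 0 := ⟨x, by simpa using one_nsmul x⟩
    have hfg : PP (Nat.findGreatest PP B) := Nat.findGreatest_spec (Nat.zero_le B) hP0
    have hdy := h p (Nat.findGreatest PP B) hp hfg
    have hyeq : (y : ℚ × ℚ) = (s * (x : ℚ × ℚ).1, s * (x : ℚ × ℚ).2) :=
      Prod.ext hs1.symm hs2.symm
    rw [divides_iff_dform hp, hyeq, dform_scale hp hs0 hjval] at hdy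
    have hdx2 : PP (Nat.findGreatest PP B + j) := by
      show Divides (p ^ (Nat.findGreatest PP B + j)) x
      rw [divides_iff_dform hp]
      exact hdy
    have hle := Nat.le_findGreatest (hbound _ hdx2) hdx2
    omega
  refine ⟨s.num, ?_, ?_⟩
  · rw [Rat.coe_int_num_of_den_eq_one hden]; exact hs1
  · rw [Rat.coe_int_num_of_den_eq_one hden]; exact hs2

theorem gset_torsionfree : IsTorsionFreeGrp ↥Gset := by
  intro n x hn h0
  have h1 : (n • (x : ℚ × ℚ)) = 0 := by
    have := congrArg (fun t : ↥Gset => (t : ℚ × ℚ)) h0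
    simpa using this
  have hnq : (n : ℚ) ≠ 0 := by exact_mod_cast hn
  apply coord_eq_zero
  · have := congrArg Prod.fst h1
    simp only [Prod.smul_fst, zsmul_eq_mul] at this
    rcases mul_eq_zero.1 this with h' | h'
    · exact absurd h' hnq
    · exact h'
  · have := congrArg Prod.snd h1
    simp only [Prod.smul_snd, zsmul_eq_mul] at this
    rcases mul_eq_zero.1 this with h' | h'
    · exact absurd h' hnq
    · exact h'

theorem gset_fullyTransitive : FullyTransitive ↥Gset := by
  intro x y h
  by_cases hx : x = 0
  · subst hx
    have hy0 : y = 0 := eq_zero_of_heightLE_zero h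
    exact ⟨0, by simp [hy0]⟩
  by_cases hy : y = 0
  · exact ⟨0, by simp [hy]⟩
  by_cases hdep : (x : ℚ × ℚ).1 * (y : ℚ × ℚ).2 - (x : ℚ × ℚ).2 * (y : ℚ × ℚ).1 = 0
  · obtain ⟨n, hn1, hn2⟩ := dep_scalar hx hy hdep h
    refine ⟨n • AddMonoidHom.id ↥Gset, ?_⟩
    apply Subtype.ext
    have hcoe : (((n • AddMonoidHom.id ↥Gset) x : ↥Gset) : ℚ × ℚ) = n • (x : ℚ × ℚ) := by
      simp
    rw [hcoe]
    apply Prod.ext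
    · simp only [Prod.smul_fst, zsmul_eq_mul]
      exact hn1
    · simp only [Prod.smul_snd, zsmul_eq_mul]
      exact hn2
  · exact absurd h (not_heightLE_of_indep hdep)

theorem gset_transitive : TransitiveGrp ↥Gset := by
  intro x y hEq
  obtain ⟨h, h'⟩ := hEq
  by_cases hx : x = 0
  · subst hx
    have hy0 : y = 0 := eq_zero_of_heightLE_zero h
    exact ⟨AddEquiv.refl _, by simp [hy0]⟩
  by_cases hy : y = 0
  · subst hy
    exact absurd (eq_zero_of_heightLE_zero h') hx
  by_cases hdep : (x : ℚ × ℚ).1 * (y : ℚ × ℚ).2 - (x : ℚ × ℚ).2 * (y : ℚ × ℚ).1 = 0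
  · obtain ⟨n, hn1, hn2⟩ := dep_scalar hx hy hdep h
    have hdep' : (y : ℚ × ℚ).1 * (x : ℚ × ℚ).2 - (y : ℚ × ℚ).2 * (x : ℚ × ℚ).1 = 0 := by
      linarith [hdep]
    obtain ⟨m, hm1, hm2⟩ := dep_scalar hy hx hdep' h'
    obtain ⟨qx, hqx, hqxcoord⟩ := exists_nonzero_coord hx
    have hnm : (m : ℚ) * ((n : ℚ) * qx) = qx := by
      rcases hqxcoord with h1 | h1 <;> rw [h1]
      · rw [hn1]; exact hm1
      · rw [hn2]; exact hm2
    have hmn1 : m * n = 1 := by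
      have : ((m * n : ℤ) : ℚ) * qx = 1 * qx := by push_cast; rw [one_mul]; linarith [hnm]
      have h2 : ((m * n : ℤ) : ℚ) = 1 := mul_right_cancel₀ hqx this
      exact_mod_cast h2
    rcases Int.mul_eq_one_iff_eq_one_or_neg_one.1 hmn1 with ⟨-, hn⟩ | ⟨-, hn⟩
    · subst hn
      have hxy : x = y := by
        apply Subtype.ext
        apply Prod.ext
        · rw [← hn1]; push_cast; ring
        · rw [← hn2]; push_cast; ring
      exact ⟨AddEquiv.refl _, by simpa using hxy⟩
    · subst hn
      have hxy : -x = y := by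
        apply Subtype.ext
        apply Prod.ext
        · have : ((-x : ↥Gset) : ℚ × ℚ) = -(x : ℚ × ℚ) := rfl
          rw [this, Prod.fst_neg, ← hn1]
          push_cast
          ring
        · have : ((-x : ↥Gset) : ℚ × ℚ) = -(x : ℚ × ℚ) := rfl
          rw [this, Prod.snd_neg, ← hn2]
          push_cast
          ring
      exact ⟨AddEquiv.neg _, by simpa using hxy⟩
  · exact absurd h (not_heightLE_of_indep hdep)

lemma vec_two : vec 2 = (1, 1) := by rw [vec]; simp

lemma mem_e1 : (((1 : ℚ), (0 : ℚ)) : ℚ × ℚ) ∈ Gset := by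
  intro p hp
  exact Or.inl ⟨pint_one hp.two_le, pint_zero hp.two_le⟩

lemma mem_e2 : (((0 : ℚ), (1 : ℚ)) : ℚ × ℚ) ∈ Gset := by
  intro p hp
  exact Or.inl ⟨pint_zero hp.two_le, pint_one hp.two_le⟩

lemma half_den : ((1 : ℚ)/2).den = 2 := by norm_num

lemma half_ne : ((1 : ℚ)/2) ≠ 0 := by norm_num

lemma mem_w : (((1 : ℚ)/2, (1 : ℚ)/2) : ℚ × ℚ) ∈ Gset := by
  intro p hp
  by_cases hp2 : p = 2
  · subst hp2
    right
    refine ⟨?_, ?_, ?_, ?_⟩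
    · rw [Prim, vec_two]
      rintro ⟨d1, -⟩
      have h2 : ((2:ℕ) : ℤ) ≤ 1 := Int.le_of_dvd one_pos d1
      omega
    · rw [show ((2:ℕ):ℚ) * ((1:ℚ)/2) = 1 by norm_num]
      exact pint_one (by norm_num)
    · rw [show ((2:ℕ):ℚ) * ((1:ℚ)/2) = 1 by norm_num]
      exact pint_one (by norm_num)
    · rw [vec_two, show (((1,1) : ℤ × ℤ).2 : ℚ) * ((1:ℚ)/2) -
        (((1,1) : ℤ × ℤ).1 : ℚ) * ((1:ℚ)/2) = 0 by push_cast; ring]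
      exact pint_zero (by norm_num)
  · left
    have hden : ¬ p ∣ ((1:ℚ)/2).den := by
      rw [half_den]
      intro hd
      exact hp2 ((Nat.prime_dvd_prime_iff_eq hp Nat.prime_two).1 hd)
    exact ⟨hden, hden⟩

lemma val_half_odd {p : ℕ} (hp : p.Prime) (hp2 : p ≠ 2) :
    padicValRat p ((1:ℚ)/2) = 0 := by
  haveI : Fact p.Prime := ⟨hp⟩
  rw [padicValRat.div one_ne_zero two_ne_zero, padicValRat.one, val_two_ne hp hp2]
  ring

lemma val_half_two : padicValRat 2 ((1:ℚ)/2) = -1 := by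
  haveI : Fact (Nat.Prime 2) := ⟨Nat.prime_two⟩
  rw [padicValRat.div one_ne_zero two_ne_zero, padicValRat.one]
  have h2 : padicValRat 2 (((2:ℕ)):ℚ) = 1 := padicValRat.self (by norm_num)
  have : ((2:ℕ):ℚ) = (2:ℚ) := by norm_num
  rw [this] at h2
  rw [h2]
  ring

lemma divides_pair {A B : Type} [AddCommGroup A] [AddCommGroup B] {n : ℕ} {a : A} {b : B} :
    Divides n ((a, b) : A × B) ↔ Divides n a ∧ Divides n b := by
  constructor
  · rintro ⟨z, hz⟩
    refine ⟨⟨z.1, ?_⟩, ⟨z.2, ?_⟩⟩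
    · have := congrArg Prod.fst hz
      simpa using this
    · have := congrArg Prod.snd hz
      simpa using this
  · rintro ⟨⟨za, hza⟩, ⟨zb, hzb⟩⟩
    refine ⟨(za, zb), ?_⟩
    apply Prod.ext
    · simpa using hza
    · simpa using hzb

lemma divides_p_of_pow {A : Type} [AddCommGroup A] {p k : ℕ} {x : A}
    (h : Divides (p ^ (k + 1)) x) : Divides p x := by
  obtain ⟨z, hz⟩ := h
  refine ⟨p ^ k • z, ?_⟩
  rw [smul_smul, ← pow_succ']
  exact hz

/-- abbreviations for the three special elements -/
def ee1 : ↥Gset := ⟨((1 : ℚ), (0 : ℚ)), mem_e1⟩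
def ee2 : ↥Gset := ⟨((0 : ℚ), (1 : ℚ)), mem_e2⟩
def ww : ↥Gset := ⟨((1 : ℚ)/2, (1 : ℚ)/2), mem_w⟩

lemma not_div_both_e1e2 {p : ℕ} (hp : p.Prime)
    (h1 : Divides p ee1) (h2 : Divides p ee2) : False := by
  rw [show (p:ℕ) = p^1 from (pow_one p).symm, divides_iff_dform hp] at h1 h2
  rw [show ((ee1 : ℚ × ℚ)) = ((1:ℚ), (0:ℚ)) from rfl, dform_pair] at h1
  rw [show ((ee2 : ℚ × ℚ)) = ((0:ℚ), (1:ℚ)) from rfl, dform_pair] at h2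
  have hv1 : padicValRat p (1:ℚ) = 0 := padicValRat.one
  have hdvd2 : (p : ℤ) ∣ (vec p).2 ∧ Prim p := by
    rcases h1 with ⟨hc, -⟩ | ⟨hPr, -, -, hdet⟩
    · rcases hc with hc | hc
      · exact absurd hc one_ne_zero
      · rw [hv1] at hc; omega
    · rw [show ((vec p).2 : ℚ) * (1:ℚ) - ((vec p).1 : ℚ) * (0:ℚ) = (((vec p).2 : ℤ) : ℚ)
        by push_cast; ring] at hdet
      exact ⟨int_dvd_of_vge hp _ hdet, hPr⟩
  have hdvd1 : (p : ℤ) ∣ (vec p).1 := by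
    rcases h2 with ⟨-, hc⟩ | ⟨-, -, -, hdet⟩
    · rcases hc with hc | hc
      · exact absurd hc one_ne_zero
      · rw [hv1] at hc; omega
    · rw [show ((vec p).2 : ℚ) * (0:ℚ) - ((vec p).1 : ℚ) * (1:ℚ) = (((-(vec p).1 : ℤ)) : ℚ)
        by push_cast; ring] at hdet
      exact (dvd_neg).1 (int_dvd_of_vge hp _ hdet)
  exact hdvd2.2 ⟨hdvd1, hdvd2.1⟩

lemma not_div_both_we2 {p : ℕ} (hp : p.Prime)
    (h1 : Divides p ww) (h2 : Divides p ee2) : False := by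
  rw [show (p:ℕ) = p^1 from (pow_one p).symm, divides_iff_dform hp] at h1 h2
  rw [show ((ww : ℚ × ℚ)) = ((1:ℚ)/2, (1:ℚ)/2) from rfl, dform_pair] at h1
  rw [show ((ee2 : ℚ × ℚ)) = ((0:ℚ), (1:ℚ)) from rfl, dform_pair] at h2
  by_cases hp2 : p = 2
  · subst hp2
    rcases h1 with ⟨hc, -⟩ | ⟨-, hc, -, -⟩ <;>
      rcases hc with hc | hc <;>
        first
          | exact half_ne hc
          | (rw [val_half_two] at hc; omega)
  · have hv1 : padicValRat p (1:ℚ) = 0 := padicValRat.one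
    have hdvd1 : (p : ℤ) ∣ (vec p).1 := by
      rcases h2 with ⟨-, hc⟩ | ⟨-, -, -, hdet⟩
      · rcases hc with hc | hc
        · exact absurd hc one_ne_zero
        · rw [hv1] at hc; omega
      · rw [show ((vec p).2 : ℚ) * (0:ℚ) - ((vec p).1 : ℚ) * (1:ℚ) = (((-(vec p).1 : ℤ)) : ℚ)
          by push_cast; ring] at hdet
        exact (dvd_neg).1 (int_dvd_of_vge hp _ hdet)
    rcases h1 with ⟨hc, -⟩ | ⟨hPr, -, -, hdet⟩
    · rcases hc with hc | hc
      · exact half_ne hc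
      · rw [val_half_odd hp hp2] at hc; omega
    · rw [show ((vec p).2 : ℚ) * ((1:ℚ)/2) - ((vec p).1 : ℚ) * ((1:ℚ)/2) =
        ((((vec p).2 - (vec p).1 : ℤ)) : ℚ) / 2 by push_cast; ring] at hdet
      have hsub : (p : ℤ) ∣ ((vec p).2 - (vec p).1) := int_dvd_of_vge_half hp hp2 _ hdet
      refine hPr ⟨hdvd1, ?_⟩
      have := dvd_add hsub hdvd1
      simpa using this

def uu : ↥Gset × ↥Gset := (ee1, ee2)
def vv : ↥Gset × ↥Gset := (ww, ee2)

lemma not_div_uu {p : ℕ} (hp : p.Prime) : ¬ Divides p uu := by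
  intro h
  obtain ⟨h1, h2⟩ := divides_pair.1 h
  exact not_div_both_e1e2 hp h1 h2

lemma not_div_vv {p : ℕ} (hp : p.Prime) : ¬ Divides p vv := by
  intro h
  obtain ⟨h1, h2⟩ := divides_pair.1 h
  exact not_div_both_we2 hp h1 h2

lemma heightEq_uv : HeightEq uu vv := by
  constructor <;> intro p k hp hdiv
  · cases k with
    | zero => exact ⟨vv, by simpa using one_nsmul vv⟩
    | succ k => exact absurd (divides_p_of_pow hdiv) (not_div_uu hp)
  · cases k with
    | zero => exact ⟨uu, by simpa using one_nsmul uu⟩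
    | succ k => exact absurd (divides_p_of_pow hdiv) (not_div_vv hp)

lemma div_e1 {p : ℕ} (hp : p.Prime) (hvec : vec p = (1, 0)) : Divides p ee1 := by
  rw [show (p:ℕ) = p^1 from (pow_one p).symm, divides_iff_dform hp,
    show ((ee1 : ℚ × ℚ)) = ((1:ℚ), (0:ℚ)) from rfl, dform_pair]
  right
  refine ⟨?_, ?_, Or.inl rfl, ?_⟩
  · rw [Prim, hvec]
    rintro ⟨d1, -⟩
    have h2 : ((p:ℕ) : ℤ) ≤ 1 := Int.le_of_dvd one_pos d1
    have := hp.two_le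
    omega
  · right
    rw [padicValRat.one]
    omega
  · left
    rw [hvec]
    push_cast
    ring

lemma div_e2 {p : ℕ} (hp : p.Prime) (hvec : vec p = (0, 1)) : Divides p ee2 := by
  rw [show (p:ℕ) = p^1 from (pow_one p).symm, divides_iff_dform hp,
    show ((ee2 : ℚ × ℚ)) = ((0:ℚ), (1:ℚ)) from rfl, dform_pair]
  right
  refine ⟨?_, Or.inl rfl, ?_, ?_⟩
  · rw [Prim, hvec]
    rintro ⟨-, d2⟩
    have h2 : ((p:ℕ) : ℤ) ≤ 1 := Int.le_of_dvd one_pos d2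
    have := hp.two_le
    omega
  · right
    rw [padicValRat.one]
    omega
  · left
    rw [hvec]
    push_cast
    ring

lemma second_coord_zero {a : ↥Gset}
    (hdiv : ∀ p : ℕ, p.Prime → vec p = (1, 0) → Divides p a) : (a : ℚ × ℚ).2 = 0 := by
  by_contra hne
  obtain ⟨p, hp, hvec, hN⟩ := exists_good_prime (1, 0)
    (max ((a : ℚ × ℚ).2).num.natAbs ((a : ℚ × ℚ).2).den)
  have hd := hdiv p hp hvec
  rw [show (p:ℕ) = p^1 from (pow_one p).symm, divides_iff_dform hp,
    show ((a : ℚ × ℚ)) = ((a : ℚ × ℚ).1, (a : ℚ × ℚ).2) from rfl, dform_pair] at hd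
  have hv : padicValRat p (a : ℚ × ℚ).2 = 0 := val_zero_of_big' hp hne (by omega) (by omega)
  rcases hd with ⟨-, h2⟩ | ⟨-, -, -, hdet⟩
  · rcases h2 with h | h
    · exact hne h
    · rw [hv] at h; omega
  · rw [hvec, show (((1, 0) : ℤ × ℤ).2 : ℚ) * (a : ℚ × ℚ).1 -
      (((1, 0) : ℤ × ℤ).1 : ℚ) * (a : ℚ × ℚ).2 = -(a : ℚ × ℚ).2 by push_cast; ring] at hdet
    rcases hdet with h | h
    · exact hne (neg_eq_zero.1 h)
    · rw [padicValRat.neg, hv] at h; omega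

lemma first_coord_zero {a : ↥Gset}
    (hdiv : ∀ p : ℕ, p.Prime → vec p = (0, 1) → Divides p a) : (a : ℚ × ℚ).1 = 0 := by
  by_contra hne
  obtain ⟨p, hp, hvec, hN⟩ := exists_good_prime (0, 1)
    (max ((a : ℚ × ℚ).1).num.natAbs ((a : ℚ × ℚ).1).den)
  have hd := hdiv p hp hvec
  rw [show (p:ℕ) = p^1 from (pow_one p).symm, divides_iff_dform hp,
    show ((a : ℚ × ℚ)) = ((a : ℚ × ℚ).1, (a : ℚ × ℚ).2) from rfl, dform_pair] at hd
  have hv : padicValRat p (a : ℚ × ℚ).1 = 0 := val_zero_of_big' hp hne (by omega) (by omega)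
  rcases hd with ⟨h1, -⟩ | ⟨-, -, -, hdet⟩
  · rcases h1 with h | h
    · exact hne h
    · rw [hv] at h; omega
  · rw [hvec, show (((0, 1) : ℤ × ℤ).2 : ℚ) * (a : ℚ × ℚ).1 -
      (((0, 1) : ℤ × ℤ).1 : ℚ) * (a : ℚ × ℚ).2 = (a : ℚ × ℚ).1 by push_cast; ring] at hdet
    rcases hdet with h | h
    · exact hne h
    · rw [hv] at h; omega

theorem gset_not_krylov : ¬ KrylovTransitive (↥Gset × ↥Gset) := by
  intro hK
  obtain ⟨φ, hφ⟩ := hK uu vv heightEq_uv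
  have htrans : ∀ (u0 : ↥Gset × ↥Gset) (p : ℕ), Divides p u0 → Divides p ((φ u0).1) := by
    rintro u0 p ⟨z, hz⟩
    refine ⟨(φ z).1, ?_⟩
    rw [← Prod.smul_fst, ← map_nsmul φ, hz]
  have ha2 : ((φ (ee1, 0)).1 : ℚ × ℚ).2 = 0 := by
    apply second_coord_zero
    intro p hp hvec
    apply htrans
    exact divides_pair.2 ⟨div_e1 hp hvec, ⟨0, smul_zero _⟩⟩
  have hb1 : ((φ (0, ee2)).1 : ℚ × ℚ).1 = 0 := by
    apply first_coord_zero
    intro p hp hvec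
    apply htrans
    exact divides_pair.2 ⟨⟨0, smul_zero _⟩, div_e2 hp hvec⟩
  have hsum : (φ (ee1, 0)).1 + (φ (0, ee2)).1 = ww := by
    have h1 : ((ee1, (0 : ↥Gset)) : ↥Gset × ↥Gset) + ((0 : ↥Gset), ee2) = uu := by
      apply Prod.ext <;> simp [uu]
    calc (φ (ee1, 0)).1 + (φ (0, ee2)).1 = (φ (ee1, 0) + φ (0, ee2)).1 := rfl
      _ = (φ ((ee1, 0) + (0, ee2))).1 := by rw [map_add]
      _ = (φ uu).1 := by rw [h1]
      _ = ww := by rw [hφ]; rfl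
  have ha1 : ((φ (ee1, 0)).1 : ℚ × ℚ).1 = (1:ℚ)/2 := by
    have := congrArg (fun t : ↥Gset => (t : ℚ × ℚ).1) hsum
    simp only [AddSubgroup.coe_add, Prod.fst_add] at this
    rw [hb1, add_zero] at this
    exact this
  have hmem := ((φ (ee1, 0)).1).2 2 Nat.prime_two
  rcases hmem with ⟨h1, -⟩ | ⟨-, -, -, hdet⟩
  · apply h1
    rw [ha1, half_den]
  · apply hdet
    rw [vec_two, ha2, ha1]
    rw [show (((1,1) : ℤ × ℤ).2 : ℚ) * ((1:ℚ)/2) - (((1,1) : ℤ × ℤ).1 : ℚ) * 0 = (1:ℚ)/2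
      by push_cast; ring, half_den]

end S14

theorem stmt_14 : ∃ (G : Type) (_ : AddCommGroup G),
    IsTorsionFreeGrp G ∧ TransitiveGrp G ∧ FullyTransitive G ∧
      ¬ KrylovTransitive (G × G) := by
  exact ⟨↥S14.Gset, inferInstance, S14.gset_torsionfree, S14.gset_transitive,
    S14.gset_fullyTransitive, S14.gset_not_krylov⟩
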